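/- Let T ≥ 2 be an integer and let L(T) be the binary laminar family of subintervals of [1,T] with mapping 𝔏. Then for every interval χ ⊆ [1,T] with |χ| ≥ 3, the interval 𝔏(χ) exists and |χ| ≤ 4·|𝔏(χ)|. -/

import Mathlib

/-- The binary laminar family `L(T)` of subintervals of `[1,T]`, given by a tree:
the root is `[1,T]`, and every node `[l,r]` with `r - l > 1` has the two children
`[l, ⌊(l+r)/2⌋]` and `[⌊(l+r)/2⌋ + 1, r]`. -/
inductive BinLam (T : ℤ) : ℤ → ℤ → Prop
  | root : BinLam T 1 T
  | left {l r : ℤ} : BinLam T l r → 1 < r - l → BinLam T l ((l + r) / 2)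
  | right {l r : ℤ} : BinLam T l r → 1 < r - l → BinLam T ((l + r) / 2 + 1) r

/-- `[l,r]` is the interval `𝔏([a,b])`: the largest interval of the binary laminar
family `L(T)` contained in `[a,b]`, ties broken by taking the rightmost one. -/
def IsLMap (T a b l r : ℤ) : Prop :=
  BinLam T l r ∧ a ≤ l ∧ r ≤ b ∧
  ∀ l' r' : ℤ, BinLam T l' r' → a ≤ l' → r' ≤ b →
    (r' - l' < r - l ∨ (r' - l' = r - l ∧ r' ≤ r))

lemma binlam_bounds {T l r : ℤ} (hT : 1 ≤ T) (h : BinLam T l r) :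
    1 ≤ l ∧ l ≤ r ∧ r ≤ T := by
  induction h with
  | root => omega
  | left h hlt ih => omega
  | right h hlt ih => omega

lemma suffix_lemma (T : ℤ) : ∀ n : ℕ, ∀ l r : ℤ, (r - l).toNat = n →
    BinLam T l r → ∀ a : ℤ, l ≤ a → a + 1 ≤ r →
    ∃ l' r', BinLam T l' r' ∧ a ≤ l' ∧ r' ≤ r ∧ r - a + 1 ≤ 2 * (r' - l' + 1) := by
  intro n
  induction n using Nat.strong_induction_on with
  | _ n ih =>
    intro l r hn h a hla har
    by_cases hal : a ≤ l
    · exact ⟨l, r, h, hal, le_refl r, by omega⟩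
    · have hm : 1 < r - l := by omega
      by_cases ham : (l + r) / 2 + 1 ≤ a
      · obtain ⟨l', r', h1, h2, h3, h4⟩ :=
          ih ((r - ((l + r) / 2 + 1)).toNat) (by omega) ((l + r) / 2 + 1) r rfl
            (BinLam.right h hm) a ham har
        exact ⟨l', r', h1, h2, h3, h4⟩
      · exact ⟨(l + r) / 2 + 1, r, BinLam.right h hm, by omega, le_refl r, by omega⟩

lemma prefix_lemma (T : ℤ) : ∀ n : ℕ, ∀ l r : ℤ, (r - l).toNat = n →
    BinLam T l r → ∀ b : ℤ, b ≤ r → l + 1 ≤ b →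
    ∃ l' r', BinLam T l' r' ∧ l ≤ l' ∧ r' ≤ b ∧ b - l + 1 ≤ 2 * (r' - l' + 1) := by
  intro n
  induction n using Nat.strong_induction_on with
  | _ n ih =>
    intro l r hn h b hbr hlb
    by_cases hrb : r ≤ b
    · exact ⟨l, r, h, le_refl l, by omega, by omega⟩
    · have hm : 1 < r - l := by omega
      by_cases hbm : b ≤ (l + r) / 2
      · obtain ⟨l', r', h1, h2, h3, h4⟩ :=
          ih (((l + r) / 2 - l).toNat) (by omega) l ((l + r) / 2) rfl
            (BinLam.left h hm) b hbm hlb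
        exact ⟨l', r', h1, h2, h3, h4⟩
      · exact ⟨l, (l + r) / 2, BinLam.left h hm, le_refl l, by omega, by omega⟩

lemma main_lemma (T : ℤ) : ∀ n : ℕ, ∀ l r : ℤ, (r - l).toNat = n →
    BinLam T l r → ∀ a b : ℤ, l ≤ a → b ≤ r → 3 ≤ b - a + 1 →
    ∃ l' r', BinLam T l' r' ∧ a ≤ l' ∧ r' ≤ b ∧ b - a + 1 ≤ 4 * (r' - l' + 1) := by
  intro n
  induction n using Nat.strong_induction_on with
  | _ n ih =>
    intro l r hn h a b hla hbr hab
    have hm : 1 < r - l := by omega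
    by_cases hbm : b ≤ (l + r) / 2
    · obtain ⟨l', r', h1, h2, h3, h4⟩ :=
        ih (((l + r) / 2 - l).toNat) (by omega) l ((l + r) / 2) rfl
          (BinLam.left h hm) a b hla hbm hab
      exact ⟨l', r', h1, h2, h3, h4⟩
    · by_cases ham : (l + r) / 2 + 1 ≤ a
      · obtain ⟨l', r', h1, h2, h3, h4⟩ :=
          ih ((r - ((l + r) / 2 + 1)).toNat) (by omega) ((l + r) / 2 + 1) r rfl
            (BinLam.right h hm) a b ham hbr hab
        exact ⟨l', r', h1, h2, h3, h4⟩
      · -- a ≤ (l+r)/2 < b : straddles the midpoint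
        by_cases hhalf : b - (l + r) / 2 ≤ (l + r) / 2 - a + 1
        · -- left half is at least as big: suffix of left child
          obtain ⟨l', r', h1, h2, h3, h4⟩ :=
            suffix_lemma T (((l + r) / 2 - l).toNat) l ((l + r) / 2) rfl
              (BinLam.left h hm) a hla (by omega)
          exact ⟨l', r', h1, h2, by omega, by omega⟩
        · -- right half bigger: prefix of right child
          obtain ⟨l', r', h1, h2, h3, h4⟩ :=
            prefix_lemma T ((r - ((l + r) / 2 + 1)).toNat) ((l + r) / 2 + 1) r rfl
              (BinLam.right h hm) b hbr (by omega)
          exact ⟨l', r', h1, by omega, h3, by omega⟩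

theorem stmt_4 (T : ℤ) (hT : 2 ≤ T)
    (a b : ℤ) (ha : 1 ≤ a) (hb : b ≤ T) (hab : 3 ≤ b - a + 1) :
    ∃ l r : ℤ, IsLMap T a b l r ∧ b - a + 1 ≤ 4 * (r - l + 1) := by
  obtain ⟨l0, r0, h0, ha0, hb0, hsz0⟩ :=
    main_lemma T ((T - 1).toNat) 1 T rfl BinLam.root a b ha hb hab
  set S : Set (ℤ × ℤ) := {p | BinLam T p.1 p.2 ∧ a ≤ p.1 ∧ p.2 ≤ b} with hS
  have hfin : S.Finite := by
    apply Set.Finite.subset (Set.finite_Icc (a, a) (b, b))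
    rintro ⟨l, r⟩ ⟨h1, h2, h3⟩
    have hB := binlam_bounds (by omega) h1
    simp only [Set.mem_Icc, Prod.mk_le_mk]
    exact ⟨⟨h2, by omega⟩, ⟨by omega, h3⟩⟩
  have hne : S.Nonempty := ⟨(l0, r0), h0, ha0, hb0⟩
  obtain ⟨⟨l, r⟩, hmem, hmax⟩ :=
    Set.Finite.exists_maximalFor (fun p : ℤ × ℤ => (p.2 - p.1) * (2 * T) + p.2) S hfin hne
  obtain ⟨hl_bl, hl_a, hl_b⟩ := hmem
  have hforall : ∀ l' r' : ℤ, BinLam T l' r' → a ≤ l' → r' ≤ b →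
      (r' - l' < r - l ∨ (r' - l' = r - l ∧ r' ≤ r)) := by
    intro l' r' h' ha' hb'
    have hmem' : (l', r') ∈ S := ⟨h', ha', hb'⟩
    have hle : (r' - l') * (2 * T) + r' ≤ (r - l) * (2 * T) + r := by
      by_contra hcon
      push_neg at hcon
      have heq := hmax hmem' (le_of_lt hcon)
      simp only at heq
      omega
    have B := binlam_bounds (by omega) hl_bl
    have B' := binlam_bounds (by omega) h'
    rcases lt_trichotomy (r' - l') (r - l) with h1 | h1 | h1
    · exact Or.inl h1
    · refine Or.inr ⟨h1, ?_⟩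
      rw [h1] at hle
      linarith
    · exfalso
      have key : 2 * T ≤ (r' - l' - (r - l)) * (2 * T) :=
        le_mul_of_one_le_left (by linarith) (by omega)
      nlinarith [hle, key, B.1, B.2.1, B.2.2, B'.1, B'.2.1, B'.2.2]
  have hcmp := hforall l0 r0 h0 ha0 hb0
  exact ⟨l, r, ⟨hl_bl, hl_a, hl_b, hforall⟩, by omega⟩
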